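/- Let k ≥ 4 be an integer and let G be a connected k-chordal simple graph. Then G is (⌊k/2⌋/2)-hyperbolic; that is, for all vertices x, y, u, v of G one has d(x,y) + d(u,v) ≤ max(d(x,u) + d(y,v), d(x,v) + d(y,u)) + ⌊k/2⌋. -/

import Mathlib

open SimpleGraph

section Helpers

private lemma noncross (m dxy duv a b c i0 j0 j1 l : ℕ)
    (hm : 2 ≤ m) (hj0 : j0 ≤ b) (hl : l ≤ c)
    (h1 : dxy ≤ i0 + 1 + (b - j0)) (h2 : duv ≤ j1 + 1 + (c - l)) (h3 : b ≤ j1 + 1 + l)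
    (h4 : j0 + i0 ≤ a + 1) (h5 : a + c + m + 1 ≤ dxy + duv) : j0 ≤ j1 := by
  omega

variable {V : Type*} {G : SimpleGraph V}

private lemma dist_getVert_le (hG : G.Connected) {x y : V} (w : G.Walk x y) :
    ∀ i : ℕ, G.dist x (w.getVert i) ≤ i := by
  induction w with
  | nil =>
    intro i
    rw [SimpleGraph.Walk.getVert_of_length_le _ (by simp : SimpleGraph.Walk.nil.length ≤ i)]
    simp [SimpleGraph.dist_self]
  | @cons x' z y' h w ih =>
    intro i
    cases i with
    | zero => simp [SimpleGraph.Walk.getVert_zero, SimpleGraph.dist_self]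
    | succ i =>
      rw [SimpleGraph.Walk.getVert_cons_succ]
      calc G.dist x' (w.getVert i) ≤ G.dist x' z + G.dist z (w.getVert i) :=
            hG.dist_triangle
        _ ≤ 1 + i := by
            have h1 : G.dist x' z = 1 := (SimpleGraph.dist_eq_one_iff_adj).mpr h
            have := ih i
            omega
      omega

private lemma exists_geo (hG : G.Connected) (x y : V) :
    ∃ g : ℕ → V, g 0 = x ∧ g (G.dist x y) = y ∧
      (∀ i, i ≤ G.dist x y → G.dist x (g i) = i ∧ G.dist (g i) y = G.dist x y - i) ∧
      (∀ i, i < G.dist x y → G.Adj (g i) (g (i + 1))) := by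
  obtain ⟨w, hw⟩ := hG.exists_walk_length_eq_dist x y
  refine ⟨w.getVert, w.getVert_zero, by rw [← hw]; exact w.getVert_length, ?_, ?_⟩
  · intro i hi
    have h1 : G.dist x (w.getVert i) ≤ i := dist_getVert_le hG w i
    have h2 : G.dist (w.getVert i) y ≤ G.dist x y - i := by
      have h3 := dist_getVert_le hG w.reverse (w.length - i)
      rw [SimpleGraph.Walk.getVert_reverse] at h3
      have h4 : w.length - (w.length - i) = i := by omega
      rw [h4] at h3
      rw [SimpleGraph.dist_comm]
      omega
    have h5 : G.dist x y ≤ G.dist x (w.getVert i) + G.dist (w.getVert i) y :=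
      hG.dist_triangle
    omega
  · intro i hi
    exact w.adj_getVert_succ (by omega)

private lemma corner (p q : ℕ → V) (a b : ℕ)
    (hw : ∃ i, i ≤ a ∧ ∃ j, j ≤ b ∧ G.dist (p i) (q j) ≤ 1) :
    ∃ i1 j1, i1 ≤ a ∧ j1 ≤ b ∧ G.dist (p i1) (q j1) ≤ 1 ∧
      (∀ i j, i < i1 → j ≤ b → 2 ≤ G.dist (p i) (q j)) ∧
      (∀ j, j1 < j → j ≤ b → 2 ≤ G.dist (p i1) (q j)) := by
  classical
  obtain ⟨i0, hi0, hex⟩ := hw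
  have hP : ∃ i, ∃ j, j ≤ b ∧ G.dist (p i) (q j) ≤ 1 := ⟨i0, hex⟩
  set i1 := Nat.find hP with hi1def
  obtain ⟨j0, hj0b, hj0⟩ := Nat.find_spec hP
  set Q : ℕ → Prop := fun j => G.dist (p i1) (q j) ≤ 1 with hQdef
  have hQspec : Q (Nat.findGreatest Q b) :=
    Nat.findGreatest_spec (m := j0) hj0b (show Q j0 from hj0)
  refine ⟨i1, Nat.findGreatest Q b, le_trans (Nat.find_le hex) hi0, Nat.findGreatest_le b,
    hQspec, ?_, ?_⟩
  · intro i j hi hj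
    have := Nat.find_min hP hi
    push_neg at this
    have := this j hj
    omega
  · intro j hj hjb
    have := Nat.findGreatest_is_greatest (P := Q) hj hjb
    simp only [hQdef] at this
    omega

private lemma cycle_embedding (G : SimpleGraph V) (n : ℕ) (hn3 : 3 ≤ n) (f : ℕ → V)
    (hstep : ∀ t, t + 1 < n → G.Adj (f t) (f (t + 1)))
    (hwrap : G.Adj (f (n - 1)) (f 0))
    (hfar : ∀ t t', t + 1 < t' → t' < n → ¬(t = 0 ∧ t' + 1 = n) →
      ¬ G.Adj (f t) (f t') ∧ f t ≠ f t') :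
    Nonempty (SimpleGraph.cycleGraph n ↪g G) := by
  have hchar : ∀ ι κ : Fin n, (SimpleGraph.cycleGraph n).Adj ι κ ↔
      (κ.val = ι.val + 1 ∨ ι.val = κ.val + 1 ∨ (ι.val = 0 ∧ κ.val = n - 1) ∨
        (κ.val = 0 ∧ ι.val = n - 1)) := by
    intro ι κ
    rw [SimpleGraph.cycleGraph_adj']
    have hι := ι.isLt
    have hκ := κ.isLt
    have hsub : ∀ A B : Fin n, (A - B).val = ((n - B.val) + A.val) % n := by
      intro A B; rw [Fin.sub_def]
    have hmod : ∀ x : ℕ, x < 2 * n → (x < n ∧ x % n = x) ∨ (n ≤ x ∧ x % n = x - n) := by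
      intro x hx
      rcases lt_or_ge x n with h | h
      · exact Or.inl ⟨h, Nat.mod_eq_of_lt h⟩
      · refine Or.inr ⟨h, ?_⟩
        rw [Nat.mod_eq_sub_mod h, Nat.mod_eq_of_lt (by omega)]
    have e1 := hmod ((n - κ.val) + ι.val) (by omega)
    have e2 := hmod ((n - ι.val) + κ.val) (by omega)
    rw [hsub, hsub]
    rcases e1 with ⟨he1, e1⟩ | ⟨he1, e1⟩ <;> rcases e2 with ⟨he2, e2⟩ | ⟨he2, e2⟩ <;>
      rw [e1, e2] <;> omega
  have hkey : ∀ t t', t < t' → t' < n → G.Adj (f t) (f t') →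
      t' = t + 1 ∨ (t = 0 ∧ t' = n - 1) := by
    intro t t' hlt hn h
    by_contra hcon
    push_neg at hcon
    have h1 : t + 1 < t' := by
      rcases Nat.lt_or_ge (t + 1) t' with h' | h'
      · exact h'
      · exfalso; exact hcon.1 (by omega)
    have h2 : ¬(t = 0 ∧ t' + 1 = n) := by
      intro ⟨ha, hb⟩
      exact hcon.2 ha (by omega)
    exact (hfar t t' h1 hn h2).1 h
  refine ⟨⟨⟨fun ι => f ι.val, ?_⟩, ?_⟩⟩
  · intro ι κ h
    simp only at h
    rcases Nat.lt_trichotomy ι.val κ.val with hlt | heq | hgt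
    · exfalso
      rcases Nat.lt_or_ge (ι.val + 1) κ.val with h1 | h1
      · by_cases h2 : ι.val = 0 ∧ κ.val + 1 = n
        · have := hwrap
          rw [show (n:ℕ) - 1 = κ.val by omega, show (0:ℕ) = ι.val by omega] at this
          exact this.ne' h
        · exact (hfar ι.val κ.val h1 κ.isLt h2).2 h
      · have h2 : κ.val = ι.val + 1 := by omega
        have := hstep ι.val (by omega)
        rw [← h2] at this
        exact this.ne h
    · exact Fin.ext heq
    · exfalso
      rcases Nat.lt_or_ge (κ.val + 1) ι.val with h1 | h1
      · by_cases h2 : κ.val = 0 ∧ ι.val + 1 = n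
        · have := hwrap
          rw [show (n:ℕ) - 1 = ι.val by omega, show (0:ℕ) = κ.val by omega] at this
          exact this.ne h
        · exact (hfar κ.val ι.val h1 ι.isLt h2).2 h.symm
      · have h2 : ι.val = κ.val + 1 := by omega
        have := hstep κ.val (by omega)
        rw [← h2] at this
        exact this.ne h.symm
  · intro ι κ
    show G.Adj (f ι.val) (f κ.val) ↔ (SimpleGraph.cycleGraph n).Adj ι κ
    rw [hchar]
    constructor
    · intro hadj
      rcases Nat.lt_trichotomy ι.val κ.val with hlt | heq | hgt
      · rcases hkey ι.val κ.val hlt κ.isLt hadj with h | ⟨h1, h2⟩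
        · exact Or.inl h
        · exact Or.inr (Or.inr (Or.inl ⟨h1, h2⟩))
      · exfalso
        have : ι = κ := Fin.ext heq
        rw [this] at hadj
        exact G.loopless.irrefl _ hadj
      · rcases hkey κ.val ι.val hgt ι.isLt hadj.symm with h | ⟨h1, h2⟩
        · exact Or.inr (Or.inl h)
        · exact Or.inr (Or.inr (Or.inr ⟨h1, h2⟩))
    · intro hc
      rcases hc with h | h | ⟨h1, h2⟩ | ⟨h1, h2⟩
      · have := hstep ι.val (by omega)
        rwa [← h] at this
      · have := hstep κ.val (by omega)
        rw [← h] at this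
        exact this.symm
      · have := hwrap
        rw [← h1, ← h2] at this
        exact this.symm
      · have := hwrap
        rw [← h1, ← h2] at this
        exact this
end Helpers

/-- A graph is `k`-chordal if it has no induced cycle of length greater than `k`:
for every `n > k` (with `n ≥ 3`) there is no graph embedding of the cycle graph
`C_n` into `G`. -/
def IsKChordal {V : Type*} (G : SimpleGraph V) (k : ℕ) : Prop :=
  ∀ n : ℕ, 3 ≤ n → k < n → IsEmpty (SimpleGraph.cycleGraph n ↪g G)

set_option maxHeartbeats 2000000 in
/-- Every connected `k`-chordal graph (`k ≥ 4`) is `(⌊k/2⌋/2)`-hyperbolic. -/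
theorem chordal_hyperbolic {V : Type*} (G : SimpleGraph V) (hG : G.Connected)
    (k : ℕ) (hk : 4 ≤ k) (hchord : IsKChordal G k) :
    ∀ x y u v : V,
      G.dist x y + G.dist u v ≤
        max (G.dist x u + G.dist y v) (G.dist x v + G.dist y u) + k / 2 := by
  classical
  intro x y u v
  by_contra hcon
  push_neg at hcon
  rw [SimpleGraph.dist_comm (G := G) (u := x) (v := v), SimpleGraph.dist_comm (G := G) (u := y) (v := u)] at hcon
  have hm : 2 ≤ k / 2 := by omega
  have hS1 : G.dist x u + G.dist y v + k / 2 + 1 ≤ G.dist x y + G.dist u v := by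
    have := le_max_left (G.dist x u + G.dist y v) (G.dist v x + G.dist u y)
    omega
  have hS2 : G.dist v x + G.dist u y + k / 2 + 1 ≤ G.dist x y + G.dist u v := by
    have := le_max_right (G.dist x u + G.dist y v) (G.dist v x + G.dist u y)
    omega
  have tri4 : ∀ a₁ a₂ a₃ a₄ : V,
      G.dist a₁ a₄ ≤ G.dist a₁ a₂ + G.dist a₂ a₃ + G.dist a₃ a₄ := by
    intro a₁ a₂ a₃ a₄
    calc G.dist a₁ a₄ ≤ G.dist a₁ a₃ + G.dist a₃ a₄ := hG.dist_triangle
      _ ≤ G.dist a₁ a₂ + G.dist a₂ a₃ + G.dist a₃ a₄ := by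
          have := hG.dist_triangle (u := a₁) (v := a₂) (w := a₃)
          omega
  obtain ⟨p, hp0, hpa, hpd, hpadj⟩ := exists_geo hG x u
  obtain ⟨q, hq0, hqb, hqd, hqadj⟩ := exists_geo hG u y
  obtain ⟨r, hr0, hrc, hrd, hradj⟩ := exists_geo hG y v
  obtain ⟨s, hs0, hse, hsd, hsadj⟩ := exists_geo hG v x
  -- opposite sides are at distance ≥ 2
  have O13 : ∀ i l, i ≤ G.dist x u → l ≤ G.dist y v → 2 ≤ G.dist (p i) (r l) := by
    intro i l hi hl
    have t1 := tri4 x (p i) (r l) y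
    have t2 := tri4 u (p i) (r l) v
    have e1 := (hpd i hi).1
    have e2 := (hpd i hi).2
    have e3 := (hrd l hl).1
    have e4 := (hrd l hl).2
    have c1 : G.dist (r l) y = G.dist y (r l) := SimpleGraph.dist_comm
    have c2 : G.dist u (p i) = G.dist (p i) u := SimpleGraph.dist_comm
    omega
  have O24 : ∀ j t, j ≤ G.dist u y → t ≤ G.dist v x → 2 ≤ G.dist (q j) (s t) := by
    intro j t hj ht
    have t1 := tri4 u (q j) (s t) v
    have t2 := tri4 y (q j) (s t) x
    have e1 := (hqd j hj).1
    have e2 := (hqd j hj).2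
    have e3 := (hsd t ht).1
    have e4 := (hsd t ht).2
    have c1 : G.dist (s t) v = G.dist v (s t) := SimpleGraph.dist_comm
    have c2 : G.dist y (q j) = G.dist (q j) y := SimpleGraph.dist_comm
    have c3 : G.dist y x = G.dist x y := SimpleGraph.dist_comm
    omega
  -- within a side, far indices are far
  have wP : ∀ i i', i + 2 ≤ i' → i' ≤ G.dist x u → 2 ≤ G.dist (p i) (p i') := by
    intro i i' h hi'
    have t1 := hG.dist_triangle (u := x) (v := p i) (w := p i')
    have e1 := (hpd i (by omega)).1
    have e2 := (hpd i' hi').1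
    omega
  have wQ : ∀ j j', j + 2 ≤ j' → j' ≤ G.dist u y → 2 ≤ G.dist (q j) (q j') := by
    intro j j' h hj'
    have t1 := hG.dist_triangle (u := u) (v := q j) (w := q j')
    have e1 := (hqd j (by omega)).1
    have e2 := (hqd j' hj').1
    omega
  have wR : ∀ l l', l + 2 ≤ l' → l' ≤ G.dist y v → 2 ≤ G.dist (r l) (r l') := by
    intro l l' h hl'
    have t1 := hG.dist_triangle (u := y) (v := r l) (w := r l')
    have e1 := (hrd l (by omega)).1
    have e2 := (hrd l' hl').1
    omega
  have wS : ∀ t t', t + 2 ≤ t' → t' ≤ G.dist v x → 2 ≤ G.dist (s t) (s t') := by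
    intro t t' h ht'
    have t1 := hG.dist_triangle (u := v) (v := s t) (w := s t')
    have e1 := (hsd t (by omega)).1
    have e2 := (hsd t' ht').1
    omega
  -- the four corner cut points
  obtain ⟨i1, j1, hi1a, hj1b, hjmp1, hC1a, hC1b⟩ :=
    corner (G := G) p q (G.dist x u) (G.dist u y)
      ⟨G.dist x u, le_refl _, 0, Nat.zero_le _, by rw [hpa, hq0]; simp [SimpleGraph.dist_self]⟩
  obtain ⟨j2, l2, hj2b, hl2c, hjmp2, hC2a, hC2b⟩ :=
    corner (G := G) q r (G.dist u y) (G.dist y v)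
      ⟨G.dist u y, le_refl _, 0, Nat.zero_le _, by rw [hqb, hr0]; simp [SimpleGraph.dist_self]⟩
  obtain ⟨l3, t3, hl3c, ht3e, hjmp3, hC3a, hC3b⟩ :=
    corner (G := G) r s (G.dist y v) (G.dist v x)
      ⟨G.dist y v, le_refl _, 0, Nat.zero_le _, by rw [hrc, hs0]; simp [SimpleGraph.dist_self]⟩
  obtain ⟨t4, i4, ht4e, hi4a, hjmp4, hC4a, hC4b⟩ :=
    corner (G := G) s p (G.dist v x) (G.dist x u)
      ⟨G.dist v x, le_refl _, 0, Nat.zero_le _, by rw [hse, hp0]; simp [SimpleGraph.dist_self]⟩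
  -- ordering of cut points (non-crossing)
  have h_ord_j : j1 ≤ j2 := by
    refine noncross (k / 2) (G.dist x y) (G.dist u v) (G.dist x u) (G.dist u y) (G.dist y v)
      i1 j1 j2 l2 hm hj1b hl2c ?_ ?_ ?_ ?_ (by omega)
    · have t1 := tri4 x (p i1) (q j1) y
      have e1 := (hpd i1 hi1a).1
      have e2 := (hqd j1 hj1b).2
      omega
    · have t1 := tri4 u (q j2) (r l2) v
      have e1 := (hqd j2 hj2b).1
      have e2 := (hrd l2 hl2c).2
      omega
    · have t1 := tri4 u (q j2) (r l2) y
      have e1 := (hqd j2 hj2b).1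
      have c1 : G.dist (r l2) y = G.dist y (r l2) := SimpleGraph.dist_comm
      have e2 := (hrd l2 hl2c).1
      omega
    · have t1 := hG.dist_triangle (u := u) (v := p i1) (w := q j1)
      have e1 := (hqd j1 hj1b).1
      have c1 : G.dist u (p i1) = G.dist (p i1) u := SimpleGraph.dist_comm
      have e2 := (hpd i1 hi1a).2
      omega
  have h_ord_l : l2 ≤ l3 := by
    refine noncross (k / 2) (G.dist u v) (G.dist x y) (G.dist u y) (G.dist y v) (G.dist v x)
      j2 l2 l3 t3 hm hl2c ht3e ?_ ?_ ?_ ?_ (by omega)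
    · have t1 := tri4 u (q j2) (r l2) v
      have e1 := (hqd j2 hj2b).1
      have e2 := (hrd l2 hl2c).2
      omega
    · have t1 := tri4 y (r l3) (s t3) x
      have e1 := (hrd l3 hl3c).1
      have e2 := (hsd t3 ht3e).2
      have c1 : G.dist y x = G.dist x y := SimpleGraph.dist_comm
      omega
    · have t1 := tri4 y (r l3) (s t3) v
      have e1 := (hrd l3 hl3c).1
      have c1 : G.dist (s t3) v = G.dist v (s t3) := SimpleGraph.dist_comm
      have e2 := (hsd t3 ht3e).1
      omega
    · have t1 := hG.dist_triangle (u := y) (v := q j2) (w := r l2)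
      have e1 := (hrd l2 hl2c).1
      have c1 : G.dist y (q j2) = G.dist (q j2) y := SimpleGraph.dist_comm
      have e2 := (hqd j2 hj2b).2
      omega
  have h_ord_t : t3 ≤ t4 := by
    refine noncross (k / 2) (G.dist x y) (G.dist u v) (G.dist y v) (G.dist v x) (G.dist x u)
      l3 t3 t4 i4 hm ht3e hi4a ?_ ?_ ?_ ?_ (by omega)
    · have t1 := tri4 y (r l3) (s t3) x
      have e1 := (hrd l3 hl3c).1
      have e2 := (hsd t3 ht3e).2
      have c1 : G.dist y x = G.dist x y := SimpleGraph.dist_comm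
      omega
    · have t1 := tri4 v (s t4) (p i4) u
      have e1 := (hsd t4 ht4e).1
      have e2 := (hpd i4 hi4a).2
      have c1 : G.dist v u = G.dist u v := SimpleGraph.dist_comm
      omega
    · have t1 := tri4 v (s t4) (p i4) x
      have e1 := (hsd t4 ht4e).1
      have c1 : G.dist (p i4) x = G.dist x (p i4) := SimpleGraph.dist_comm
      have e2 := (hpd i4 hi4a).1
      omega
    · have t1 := hG.dist_triangle (u := v) (v := r l3) (w := s t3)
      have e1 := (hsd t3 ht3e).1
      have c1 : G.dist v (r l3) = G.dist (r l3) v := SimpleGraph.dist_comm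
      have e2 := (hrd l3 hl3c).2
      omega
  have h_ord_i : i4 ≤ i1 := by
    refine noncross (k / 2) (G.dist u v) (G.dist x y) (G.dist v x) (G.dist x u) (G.dist u y)
      t4 i4 i1 j1 hm hi4a hj1b ?_ ?_ ?_ ?_ (by omega)
    · have t1 := tri4 v (s t4) (p i4) u
      have e1 := (hsd t4 ht4e).1
      have e2 := (hpd i4 hi4a).2
      have c1 : G.dist v u = G.dist u v := SimpleGraph.dist_comm
      omega
    · have t1 := tri4 x (p i1) (q j1) y
      have e1 := (hpd i1 hi1a).1
      have e2 := (hqd j1 hj1b).2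
      omega
    · have t1 := tri4 x (p i1) (q j1) u
      have e1 := (hpd i1 hi1a).1
      have c1 : G.dist (q j1) u = G.dist u (q j1) := SimpleGraph.dist_comm
      have e2 := (hqd j1 hj1b).1
      omega
    · have t1 := hG.dist_triangle (u := x) (v := s t4) (w := p i4)
      have e1 := (hpd i4 hi4a).1
      have c1 : G.dist x (s t4) = G.dist (s t4) x := SimpleGraph.dist_comm
      have e2 := (hsd t4 ht4e).2
      omega
  -- jump distances
  -- jump distances
  obtain ⟨d1, hd1e⟩ : ∃ z, z = G.dist (p i1) (q j1) := ⟨_, rfl⟩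
  obtain ⟨d2, hd2e⟩ : ∃ z, z = G.dist (q j2) (r l2) := ⟨_, rfl⟩
  obtain ⟨d3, hd3e⟩ : ∃ z, z = G.dist (r l3) (s t3) := ⟨_, rfl⟩
  obtain ⟨d4, hd4e⟩ : ∃ z, z = G.dist (s t4) (p i4) := ⟨_, rfl⟩
  have hd1le : d1 ≤ 1 := by omega
  have hd2le : d2 ≤ 1 := by omega
  have hd3le : d3 ≤ 1 := by omega
  have hd4le : d4 ≤ 1 := by omega
  -- corner cut inequalities (additive form)
  have cu : G.dist x y + j1 ≤ i1 + d1 + G.dist u y := by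
    have t1 := tri4 x (p i1) (q j1) y
    have e1 := (hpd i1 hi1a).1
    have e2 := (hqd j1 hj1b).2
    omega
  have cy : G.dist u v + l2 ≤ j2 + d2 + G.dist y v := by
    have t1 := tri4 u (q j2) (r l2) v
    have e1 := (hqd j2 hj2b).1
    have e2 := (hrd l2 hl2c).2
    omega
  have cv : G.dist x y + t3 ≤ l3 + d3 + G.dist v x := by
    have t1 := tri4 y (r l3) (s t3) x
    have e1 := (hrd l3 hl3c).1
    have e2 := (hsd t3 ht3e).2
    have c1 : G.dist y x = G.dist x y := SimpleGraph.dist_comm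
    omega
  have cx : G.dist u v + i4 ≤ t4 + d4 + G.dist x u := by
    have t1 := tri4 v (s t4) (p i4) u
    have e1 := (hsd t4 ht4e).1
    have e2 := (hpd i4 hi4a).2
    have c1 : G.dist v u = G.dist u v := SimpleGraph.dist_comm
    omega
  -- segment lengths and positions (additive form)
  obtain ⟨A1, hA1⟩ : ∃ z, i4 + z = i1 := ⟨i1 - i4, by omega⟩
  obtain ⟨qs, hqs⟩ : ∃ z, j1 + z = j2 := ⟨j2 - j1, by omega⟩
  obtain ⟨rs, hrs⟩ : ∃ z, l2 + z = l3 := ⟨l3 - l2, by omega⟩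
  obtain ⟨ts, hts⟩ : ∃ z, t3 + z = t4 := ⟨t4 - t3, by omega⟩
  obtain ⟨A2, hA2⟩ : ∃ z, z = A1 + d1 + qs := ⟨_, rfl⟩
  obtain ⟨A3, hA3⟩ : ∃ z, z = A2 + d2 + rs := ⟨_, rfl⟩
  obtain ⟨n, hndef⟩ : ∃ z, z = A3 + d3 + ts + d4 := ⟨_, rfl⟩
  have hnlb : 2 * (k / 2) + 2 ≤ n := by omega
  -- fusion and adjacency helpers for the corner jumps
  have fuse1 : d1 = 0 → p i1 = q j1 := by
    intro h; rw [← hG.dist_eq_zero_iff]; omega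
  have fuse2 : d2 = 0 → q j2 = r l2 := by
    intro h; rw [← hG.dist_eq_zero_iff]; omega
  have fuse3 : d3 = 0 → r l3 = s t3 := by
    intro h; rw [← hG.dist_eq_zero_iff]; omega
  have fuse4 : d4 = 0 → s t4 = p i4 := by
    intro h; rw [← hG.dist_eq_zero_iff]; omega
  have adj1 : d1 = 1 → G.Adj (p i1) (q j1) := by
    intro h; rw [← SimpleGraph.dist_eq_one_iff_adj]; omega
  have adj2 : d2 = 1 → G.Adj (q j2) (r l2) := by
    intro h; rw [← SimpleGraph.dist_eq_one_iff_adj]; omega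
  have adj3 : d3 = 1 → G.Adj (r l3) (s t3) := by
    intro h; rw [← SimpleGraph.dist_eq_one_iff_adj]; omega
  have adj4 : d4 = 1 → G.Adj (s t4) (p i4) := by
    intro h; rw [← SimpleGraph.dist_eq_one_iff_adj]; omega
  -- degeneracy killers
  have K1 : 1 ≤ d1 + qs + d2 := by
    by_contra hcc
    push_neg at hcc
    have e1 := fuse1 (by omega)
    have e2 := fuse2 (by omega)
    have e3 : j1 = j2 := by omega
    have h2 := O13 i1 l2 hi1a hl2c
    rw [e1, e3, e2] at h2
    simp [SimpleGraph.dist_self] at h2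
  have K2 : 1 ≤ d2 + rs + d3 := by
    by_contra hcc
    push_neg at hcc
    have e1 := fuse2 (by omega)
    have e2 := fuse3 (by omega)
    have e3 : l2 = l3 := by omega
    have h2 := O24 j2 t3 hj2b ht3e
    rw [e1, e3, e2] at h2
    simp [SimpleGraph.dist_self] at h2
  have K3 : 1 ≤ d3 + ts + d4 := by
    by_contra hcc
    push_neg at hcc
    have e1 := fuse3 (by omega)
    have e2 := fuse4 (by omega)
    have e3 : t3 = t4 := by omega
    have h2 := O13 i4 l3 hi4a hl3c
    rw [← e2, ← e3, ← e1] at h2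
    simp [SimpleGraph.dist_self] at h2
  -- the cyclic sequence of vertices
  set f : ℕ → V := fun t =>
    if t ≤ A1 then p (i4 + t)
    else if t ≤ A2 then q (j1 + (t - (A1 + d1)))
    else if t ≤ A3 then r (l2 + (t - (A2 + d2)))
    else s (t3 + (t - (A3 + d3))) with hfdef
  have hdec : ∀ t, t < n →
      (t ≤ A1 ∧ f t = p (i4 + t)) ∨
      (A1 < t ∧ t ≤ A2 ∧ A1 + d1 ≤ t ∧ f t = q (j1 + (t - (A1 + d1)))) ∨
      (A2 < t ∧ t ≤ A3 ∧ A2 + d2 ≤ t ∧ f t = r (l2 + (t - (A2 + d2)))) ∨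
      (A3 < t ∧ t < n ∧ A3 + d3 ≤ t ∧ f t = s (t3 + (t - (A3 + d3)))) := by
    intro t ht
    by_cases h1 : t ≤ A1
    · exact Or.inl ⟨h1, by simp only [hfdef]; rw [if_pos h1]⟩
    · by_cases h2 : t ≤ A2
      · exact Or.inr (Or.inl ⟨by omega, h2, by omega,
          by simp only [hfdef]; rw [if_neg h1, if_pos h2]⟩)
      · by_cases h3 : t ≤ A3
        · exact Or.inr (Or.inr (Or.inl ⟨by omega, h3, by omega,
            by simp only [hfdef]; rw [if_neg h1, if_neg h2, if_pos h3]⟩))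
        · exact Or.inr (Or.inr (Or.inr ⟨by omega, ht, by omega,
            by simp only [hfdef]; rw [if_neg h1, if_neg h2, if_neg h3]⟩))
  have hf0 : f 0 = p i4 := by
    simp only [hfdef]
    rw [if_pos (Nat.zero_le A1), Nat.add_zero]
  -- consecutive vertices are adjacent
  have hstep : ∀ t, t + 1 < n → G.Adj (f t) (f (t + 1)) := by
    intro t ht
    rcases hdec t (by omega) with ⟨hu1, hv1⟩ | ⟨hu1, hu1', hu1'', hv1⟩ |
        ⟨hu1, hu1', hu1'', hv1⟩ | ⟨hu1, hu1', hu1'', hv1⟩ <;>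
      rcases hdec (t + 1) ht with ⟨hu2, hv2⟩ | ⟨hu2, hu2', hu2'', hv2⟩ |
        ⟨hu2, hu2', hu2'', hv2⟩ | ⟨hu2, hu2', hu2'', hv2⟩ <;>
      rw [hv1, hv2]
    · -- (p,p)
      have h5 : i4 + (t + 1) = (i4 + t) + 1 := by omega
      rw [h5]
      exact hpadj _ (by omega)
    · -- (p,q)
      have h5 : i4 + t = i1 := by omega
      rcases (by omega : d1 = 0 ∨ d1 = 1) with h6 | h6
      · have h7 : j1 + (t + 1 - (A1 + d1)) = j1 + 1 := by omega
        rw [h5, h7, fuse1 h6]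
        exact hqadj _ (by omega)
      · have h7 : j1 + (t + 1 - (A1 + d1)) = j1 := by omega
        rw [h5, h7]
        exact adj1 h6
    · -- (p,r)
      have h5 : i4 + t = i1 := by omega
      have h6 : d1 = 0 ∧ j1 = j2 := by constructor <;> omega
      rcases (by omega : d2 = 0 ∨ d2 = 1) with h7 | h7
      · have h8 : l2 + (t + 1 - (A2 + d2)) = l2 + 1 := by omega
        rw [h5, h8, fuse1 h6.1, h6.2, fuse2 h7]
        exact hradj _ (by omega)
      · have h8 : l2 + (t + 1 - (A2 + d2)) = l2 := by omega
        rw [h5, h8, fuse1 h6.1, h6.2]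
        exact adj2 h7
    · -- (p,s) : impossible
      exfalso
      have h6 : d1 = 0 ∧ j1 = j2 ∧ d2 = 0 := by refine ⟨by omega, by omega, by omega⟩
      have h7 := O13 i1 l2 hi1a hl2c
      rw [fuse1 h6.1, h6.2.1, fuse2 h6.2.2] at h7
      simp [SimpleGraph.dist_self] at h7
    · -- (q,p) impossible
      exfalso; omega
    · -- (q,q)
      have h5 : j1 + (t + 1 - (A1 + d1)) = (j1 + (t - (A1 + d1))) + 1 := by omega
      rw [h5]
      exact hqadj _ (by omega)
    · -- (q,r)
      have h5 : j1 + (t - (A1 + d1)) = j2 := by omega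
      rcases (by omega : d2 = 0 ∨ d2 = 1) with h7 | h7
      · have h8 : l2 + (t + 1 - (A2 + d2)) = l2 + 1 := by omega
        rw [h5, h8, fuse2 h7]
        exact hradj _ (by omega)
      · have h8 : l2 + (t + 1 - (A2 + d2)) = l2 := by omega
        rw [h5, h8]
        exact adj2 h7
    · -- (q,s)
      have h5 : j1 + (t - (A1 + d1)) = j2 := by omega
      have h6 : d2 = 0 ∧ l2 = l3 := by constructor <;> omega
      rcases (by omega : d3 = 0 ∨ d3 = 1) with h7 | h7
      · exfalso
        have h8 := O24 j2 t3 hj2b ht3e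
        rw [fuse2 h6.1, h6.2, fuse3 h7] at h8
        simp [SimpleGraph.dist_self] at h8
      · have h8 : t3 + (t + 1 - (A3 + d3)) = t3 := by omega
        rw [h5, h8, fuse2 h6.1, h6.2]
        exact adj3 h7
    · -- (r,p) impossible
      exfalso; omega
    · -- (r,q) impossible
      exfalso; omega
    · -- (r,r)
      have h5 : l2 + (t + 1 - (A2 + d2)) = (l2 + (t - (A2 + d2))) + 1 := by omega
      rw [h5]
      exact hradj _ (by omega)
    · -- (r,s)
      have h5 : l2 + (t - (A2 + d2)) = l3 := by omega
      rcases (by omega : d3 = 0 ∨ d3 = 1) with h7 | h7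
      · have h8 : t3 + (t + 1 - (A3 + d3)) = t3 + 1 := by omega
        rw [h5, h8, fuse3 h7]
        exact hsadj _ (by omega)
      · have h8 : t3 + (t + 1 - (A3 + d3)) = t3 := by omega
        rw [h5, h8]
        exact adj3 h7
    · -- (s,p) impossible
      exfalso; omega
    · -- (s,q) impossible
      exfalso; omega
    · -- (s,r) impossible
      exfalso; omega
    · -- (s,s)
      have h5 : t3 + (t + 1 - (A3 + d3)) = (t3 + (t - (A3 + d3))) + 1 := by omega
      rw [h5]
      exact hsadj _ (by omega)
  -- the wrap-around edge
  have hwrap : G.Adj (f (n - 1)) (f 0) := by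
    rw [hf0]
    rcases hdec (n - 1) (by omega) with ⟨hu, hv⟩ | ⟨hu, hu', hu'', hv⟩ |
        ⟨hu, hu', hu'', hv⟩ | ⟨hu, hu', hu'', hv⟩ <;> rw [hv]
    · exfalso; omega
    · -- q-branch
      have h5 : j1 + (n - 1 - (A1 + d1)) = j2 := by omega
      have h6 : d2 = 0 ∧ l2 = l3 ∧ d3 = 1 ∧ t3 = t4 ∧ d4 = 0 := by
        refine ⟨by omega, by omega, by omega, by omega, by omega⟩
      rw [h5, fuse2 h6.1, h6.2.1]
      have h7 := adj3 h6.2.2.1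
      rw [h6.2.2.2.1, fuse4 h6.2.2.2.2] at h7
      exact h7
    · -- r-branch
      have h5 : l2 + (n - 1 - (A2 + d2)) = l3 := by omega
      rw [h5]
      rcases (by omega : (d3 = 1 ∧ t3 = t4 ∧ d4 = 0) ∨ (d3 = 0 ∧ t3 + 1 = t4 ∧ d4 = 0) ∨
          (d3 = 0 ∧ t3 = t4 ∧ d4 = 1)) with ⟨h6, h7, h8⟩ | ⟨h6, h7, h8⟩ | ⟨h6, h7, h8⟩
      · have h9 := adj3 h6
        rw [h7, fuse4 h8] at h9
        exact h9
      · have h9 := hsadj t3 (by omega)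
        rw [h7, fuse4 h8, ← fuse3 h6] at h9
        exact h9
      · have h9 := adj4 h8
        rw [← h7, ← fuse3 h6] at h9
        exact h9
    · -- s-branch
      rcases (by omega : d4 = 1 ∨ d4 = 0) with h6 | h6
      · have h5 : t3 + (n - 1 - (A3 + d3)) = t4 := by omega
        rw [h5]
        exact adj4 h6
      · have h9 := hsadj (t3 + (n - 1 - (A3 + d3))) (by omega)
        have h5 : t3 + (n - 1 - (A3 + d3)) + 1 = t4 := by omega
        rw [h5, fuse4 h6] at h9
        exact h9
  -- non-consecutive vertices are at distance ≥ 2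
  have hfar2 : ∀ t t', t + 1 < t' → t' < n → ¬(t = 0 ∧ t' + 1 = n) →
      2 ≤ G.dist (f t) (f t') := by
    intro t t' hlt hn' hw
    rcases hdec t (by omega) with ⟨hu1, hv1⟩ | ⟨hu1, hu1', hu1'', hv1⟩ |
        ⟨hu1, hu1', hu1'', hv1⟩ | ⟨hu1, hu1', hu1'', hv1⟩ <;>
      rcases hdec t' hn' with ⟨hu2, hv2⟩ | ⟨hu2, hu2', hu2'', hv2⟩ |
        ⟨hu2, hu2', hu2'', hv2⟩ | ⟨hu2, hu2', hu2'', hv2⟩ <;>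
      rw [hv1, hv2]
    · -- (p,p)
      exact wP _ _ (by omega) (by omega)
    · -- (p,q)
      rcases Nat.lt_or_ge (i4 + t) i1 with h5 | h5
      · exact hC1a _ _ h5 (by omega)
      · have h6 : i4 + t = i1 := by omega
        rw [h6]
        exact hC1b _ (by omega) (by omega)
    · -- (p,r)
      exact O13 _ _ (by omega) (by omega)
    · -- (p,s)
      rw [SimpleGraph.dist_comm (G := G)]
      rcases Nat.lt_or_ge (t3 + (t' - (A3 + d3))) t4 with h5 | h5
      · exact hC4a _ _ h5 (by omega)
      · have h6 : t3 + (t' - (A3 + d3)) = t4 := by omega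
        rw [h6]
        exact hC4b _ (by omega) (by omega)
    · -- (q,p) impossible
      exfalso; omega
    · -- (q,q)
      exact wQ _ _ (by omega) (by omega)
    · -- (q,r)
      rcases Nat.lt_or_ge (j1 + (t - (A1 + d1))) j2 with h5 | h5
      · exact hC2a _ _ h5 (by omega)
      · have h6 : j1 + (t - (A1 + d1)) = j2 := by omega
        rw [h6]
        exact hC2b _ (by omega) (by omega)
    · -- (q,s)
      exact O24 _ _ (by omega) (by omega)
    · -- (r,p) impossible
      exfalso; omega
    · -- (r,q) impossible
      exfalso; omega
    · -- (r,r)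
      exact wR _ _ (by omega) (by omega)
    · -- (r,s)
      rcases Nat.lt_or_ge (l2 + (t - (A2 + d2))) l3 with h5 | h5
      · exact hC3a _ _ h5 (by omega)
      · have h6 : l2 + (t - (A2 + d2)) = l3 := by omega
        rw [h6]
        exact hC3b _ (by omega) (by omega)
    · -- (s,p) impossible
      exfalso; omega
    · -- (s,q) impossible
      exfalso; omega
    · -- (s,r) impossible
      exfalso; omega
    · -- (s,s)
      exact wS _ _ (by omega) (by omega)
  have hfar' : ∀ t t', t + 1 < t' → t' < n → ¬(t = 0 ∧ t' + 1 = n) →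
      ¬ G.Adj (f t) (f t') ∧ f t ≠ f t' := by
    intro t t' h1 h2 h3
    have h := hfar2 t t' h1 h2 h3
    constructor
    · intro hadj
      have := (SimpleGraph.dist_eq_one_iff_adj).mpr hadj
      omega
    · intro heq
      rw [heq, SimpleGraph.dist_self] at h
      omega
  obtain ⟨emb⟩ := cycle_embedding G n (by omega) f hstep hwrap hfar'
  exact (hchord n (by omega) (by omega)).false emb
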